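/- Let k be a field, let X be an integral normal scheme of finite type over k, and let U ⊆ X be a nonempty open subset whose complement S = X ∖ U (with its reduced structure) is irreducible of codimension 1 in X. Let f ∈ Γ(U, O_X) be a nonzero section, let Z_U(f) ⊆ U be its vanishing locus, and let Z̄ be the Zariski closure of Z_U(f) in X. Let Y be an integral scheme of finite type over k and let ψ : Y → X be a k-morphism such that ψ(Y) ∩ U ≠ ∅ and ψ(Y) ∩ S is dense in S. Then ψ(Y) ∩ S is not contained in Z̄. -/

import Mathlib

open AlgebraicGeometry CategoryTheory Opposite TopologicalSpace

/-- In a noetherian space, any point of the closure of `Z` lies in an irreducible closed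
subset of the closure of `Z` that meets `Z`. -/
lemma aux_exists_irred_closed_of_mem_closure {α : Type*} [TopologicalSpace α]
    [NoetherianSpace α] {Z : Set α} {x : α} (hx : x ∈ closure Z) :
    ∃ C : Set α, IsIrreducible C ∧ IsClosed C ∧ x ∈ C ∧ C ⊆ closure Z ∧ (C ∩ Z).Nonempty := by
  obtain ⟨S, hSfin, hScl, hSirr, hSun⟩ :=
    NoetherianSpace.exists_finite_set_isClosed_irreducible (isClosed_univ (X := Z))
  have h1 : Z ⊆ ⋃ t ∈ S, (Subtype.val '' t) := by
    intro z hz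
    have : (⟨z, hz⟩ : Z) ∈ ⋃₀ S := hSun ▸ Set.mem_univ _
    obtain ⟨t, ht, hzt⟩ := this
    exact Set.mem_biUnion ht ⟨⟨z, hz⟩, hzt, rfl⟩
  have h2 : ∀ t : Set Z, Subtype.val '' t ⊆ Z := fun t z ⟨w, _, hw⟩ => hw ▸ w.2
  have hx' : x ∈ ⋃ t ∈ S, closure (Subtype.val '' t) := by
    rw [← hSfin.closure_biUnion]
    exact closure_mono h1 hx
  simp only [Set.mem_iUnion] at hx'
  obtain ⟨t, ht, hxt⟩ := hx'
  have htirr : IsIrreducible (Subtype.val '' t) :=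
    (hSirr t ht).image _ continuous_subtype_val.continuousOn
  obtain ⟨z, hz⟩ := htirr.nonempty
  exact ⟨closure (Subtype.val '' t), htirr.closure, isClosed_closure, hxt,
    closure_mono (h2 t), ⟨z, subset_closure hz, h2 t hz⟩⟩

/-- A scheme of finite type over a field is a noetherian topological space. -/
lemma aux_noetherianSpace_of_finiteType {k : Type*} [Field k] (X : Scheme)
    (πX : X ⟶ Spec (CommRingCat.of k))
    [LocallyOfFiniteType πX] [QuasiCompact πX] : NoetherianSpace X := by
  have hcpt : CompactSpace X := QuasiCompact.compactSpace_of_compactSpace πX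
  have hln : IsLocallyNoetherian X := by
    refine ⟨fun V => ?_⟩
    have h := LocallyOfFiniteType.finiteType_of_affine_subset (f := πX)
      (isAffineOpen_top _) V.2 le_top
    have hk : IsNoetherianRing Γ(Spec (CommRingCat.of k), ⊤) :=
      isNoetherianRing_of_ringEquiv k
        (Scheme.ΓSpecIso (CommRingCat.of k)).symm.commRingCatIsoToRingEquiv
    letI := (πX.appLE ⊤ V.1 le_top).hom.toAlgebra
    haveI : Algebra.FiniteType Γ(Spec (CommRingCat.of k), ⊤) Γ(X, V.1) := h
    exact Algebra.FiniteType.isNoetherianRing Γ(Spec (CommRingCat.of k), ⊤) Γ(X, V.1)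
  haveI : IsNoetherian X := { }
  infer_instance

/-- **Adapted morphisms** (§3.1): if `ψ(Y)` meets `U` and `ψ(Y) ∩ S` is dense in `S`,
then `ψ` is adapted to every nonzero section `f ∈ Γ(U, O_X)`, i.e. `ψ(Y) ∩ S` is not
contained in the closure of the vanishing locus of `f`. -/
theorem adapted_of_dense_intersection
    {k : Type*} [Field k]
    (X Y : Scheme)
    (πX : X ⟶ Spec (CommRingCat.of k)) (πY : Y ⟶ Spec (CommRingCat.of k))
    [IsIntegral X] [IsIntegral Y]
    (hXnormal : ∀ x : X, IsIntegrallyClosed (X.presheaf.stalk x))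
    [LocallyOfFiniteType πX] [QuasiCompact πX]
    [LocallyOfFiniteType πY] [QuasiCompact πY]
    (U : X.Opens) (hU : (U : Set X).Nonempty)
    (S : Set X) (hSdef : S = (U : Set X)ᶜ)
    (hSirr : IsIrreducible S)
    (hcodim : Order.coheight (α := TopologicalSpace.IrreducibleCloseds X)
        ⟨S, hSirr, by rw [hSdef]; exact U.isOpen.isClosed_compl⟩ = 1)
    (f : Γ(X, U)) (hf : f ≠ 0)
    (ψ : Y ⟶ X) (hψ : ψ ≫ πX = πY)
    (hmeet : (Set.range ψ.base ∩ (U : Set X)).Nonempty)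
    (hdense : S ⊆ closure (Set.range ψ.base ∩ S)) :
    ¬ (Set.range ψ.base ∩ S ⊆ closure ((U : Set X) \ (X.basicOpen f : Set X))) := by
  intro hsub
  haveI : NoetherianSpace X := aux_noetherianSpace_of_finiteType X πX
  set Z : Set X := (U : Set X) \ (X.basicOpen f : Set X) with hZdef
  have hScl : IsClosed S := by rw [hSdef]; exact U.isOpen.isClosed_compl
  -- S is contained in the closure of Z
  have hSZ : S ⊆ closure Z := fun x hx => by
    simpa using closure_mono hsub (hdense hx)
  -- the basic open is nonempty and disjoint from the closure of Z
  have hbo : (X.basicOpen f : Set X).Nonempty := by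
    rw [← (X.basicOpen f).ne_bot_iff_nonempty]
    intro h
    exact hf ((basicOpen_eq_bot_iff f).mp h)
  have hdisj : Disjoint (X.basicOpen f : Set X) (closure Z) := by
    refine Disjoint.closure_right ?_ (X.basicOpen f).isOpen
    rw [Set.disjoint_left]
    exact fun a ha ha' => ha'.2 ha
  -- generic point of S
  have hgen : IsGenericPoint hSirr.genericPoint S :=
    hSirr.isGenericPoint_genericPoint hScl
  have hηZ : hSirr.genericPoint ∈ closure Z := hSZ hgen.mem
  obtain ⟨C, hCirr, hCcl, hηC, hCsub, z, hzC, hzZ⟩ :=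
    aux_exists_irred_closed_of_mem_closure hηZ
  -- S ⊆ C, strictly
  have hSC : S ⊆ C := by
    rw [← hgen]
    exact closure_minimal (Set.singleton_subset_iff.mpr hηC) hCcl
  have hzU : z ∈ (U : Set X) := hzZ.1
  have hzS : z ∉ S := fun h => (hSdef ▸ h) hzU
  -- the chain S < C < X in IrreducibleCloseds
  let a : IrreducibleCloseds X := ⟨S, hSirr, hScl⟩
  let b : IrreducibleCloseds X := ⟨C, hCirr, hCcl⟩
  let c : IrreducibleCloseds X := ⟨Set.univ, IrreducibleSpace.isIrreducible_univ X, isClosed_univ⟩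
  have hab : a < b := by
    rw [lt_iff_le_and_ne]
    refine ⟨fun x hx => hSC hx, fun h => hzS ?_⟩
    have : (a : Set X) = (b : Set X) := congrArg _ h
    rw [show S = (a : Set X) from rfl, this]
    exact hzC
  have hbc : b < c := by
    rw [lt_iff_le_and_ne]
    refine ⟨fun x _ => Set.mem_univ x, fun h => ?_⟩
    obtain ⟨w, hw⟩ := hbo
    have : (b : Set X) = (c : Set X) := congrArg _ h
    refine Set.disjoint_left.mp hdisj hw (hCsub ?_)
    rw [show C = (b : Set X) from rfl, this]
    exact Set.mem_univ w
  let p : LTSeries (IrreducibleCloseds X) :=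
    ((RelSeries.singleton _ c).cons b hbc).cons a (by exact hab)
  have hlen : (p.length : ℕ∞) ≤ Order.coheight a := by
    apply Order.length_le_coheight
    exact le_of_eq (RelSeries.head_cons _ _ _).symm
  have hlen2 : p.length = 2 := rfl
  rw [hlen2] at hlen
  have : Order.coheight a = 1 := hcodim
  rw [this] at hlen
  norm_num at hlen
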